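/- Assume the standing hypotheses with $C_{\phi,w}$ densely defined and let $\alpha\in(0,1]$. The domain of the $\alpha$-Aluthge transform $\Delta_\alpha(C_{\phi,w}) = |C_{\phi,w}|^{\alpha} U |C_{\phi,w}|^{1-\alpha}$ (with $C_{\phi,w}=U|C_{\phi,w}|$ the polar decomposition) equals $L^2\big((1+\mathsf{h}_{\phi,w}^{1-\alpha}+\mathsf{E}_{\phi,w}(\mathsf{h}_{\phi,w}^\alpha)\circ\phi^{-1}\cdot\mathsf{h}_{\phi,w}^{1-\alpha})\,d\mu\big)$. -/

import Mathlib

open MeasureTheory ENNReal NNReal Filter Topology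

variable {X : Type*} [MeasurableSpace X]

/-- The measure `μ_w` with density `|w|²` with respect to `μ`. -/
noncomputable def wcMeasure (μ : Measure X) (w : X → ℂ) : Measure X :=
  μ.withDensity fun x => (‖w x‖₊ : ℝ≥0∞) ^ 2

/-- The Radon–Nikodym derivative `h_{φ,w} = d(μ_w ∘ φ⁻¹)/dμ`. -/
noncomputable def wcDeriv (μ : Measure X) (w : X → ℂ) (φ : X → X) : X → ℝ≥0∞ :=
  ((wcMeasure μ w).map φ).rnDeriv μ

/-- The modified weight `w_α = w · (h_{φ,w}/(h_{φ,w}∘φ))^{α/2}` (interpreted a.e.). -/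
noncomputable def wcAlpha (μ : Measure X) (w : X → ℂ) (φ : X → X) (α : ℝ) : X → ℂ :=
  fun x => w x * (((wcDeriv μ w φ x / wcDeriv μ w φ (φ x)) ^ (α / 2)).toReal : ℂ)

/-- `E` is (a version of) the conditional expectation of the nonnegative function `f`
with respect to the σ-algebra `φ⁻¹(𝒜)` and the measure `ν`. -/
def IsCondExp (φ : X → X) (ν : Measure X) (f E : X → ℝ≥0∞) : Prop :=
  Measurable[MeasurableSpace.comap φ inferInstance] E ∧
    ∀ s : Set X, MeasurableSet s → ∫⁻ x in φ ⁻¹' s, E x ∂ν = ∫⁻ x in φ ⁻¹' s, f x ∂ν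

/-- `g = E ∘ φ⁻¹`: the measurable function with `g ∘ φ = E` a.e. `[ν]`,
vanishing a.e. `[μ]` on the set where `h = 0`. -/
def IsQuot (φ : X → X) (μ ν : Measure X) (h : X → ℝ≥0∞) (E g : X → ℝ≥0∞) : Prop :=
  Measurable g ∧ (∀ᵐ x ∂ν, g (φ x) = E x) ∧ (∀ᵐ x ∂μ, h x = 0 → g x = 0)

/-- `E` is (a version of) the conditional expectation of the complex function `f`
with respect to the σ-algebra `φ⁻¹(𝒜)` and the measure `ν`. -/
def IsCondExpC (φ : X → X) (ν : Measure X) (f E : X → ℂ) : Prop :=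
  Measurable[MeasurableSpace.comap φ inferInstance] E ∧
    ∀ s : Set X, MeasurableSet s → ν (φ ⁻¹' s) < ⊤ →
      ∫ x in φ ⁻¹' s, E x ∂ν = ∫ x in φ ⁻¹' s, f x ∂ν

/-- `f_w = χ_{{w ≠ 0}} f / w`. -/
noncomputable def fw (w f : X → ℂ) : X → ℂ := fun x => if w x = 0 then 0 else f x / w x

/-- The weight `w̃ = w/(h_{φ,w}∘φ)^{1/2}` of the partial isometry in the polar
decomposition `C_{φ,w} = U |C_{φ,w}|`, `U = C_{φ,w̃}`. -/
noncomputable def wcTilde (μ : Measure X) (w : X → ℂ) (φ : X → X) : X → ℂ :=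
  fun x => w x * (((wcDeriv μ w φ (φ x)) ^ (-(1 / 2) : ℝ)).toReal : ℂ)

/-- The function `Δ_α(C_{φ,w}) f = |C_{φ,w}|^α U |C_{φ,w}|^{1-α} f`, computed via
`|C_{φ,w}| = M_{h^{1/2}}` and `U = C_{φ,w̃}`. -/
noncomputable def aluthgeFun (μ : Measure X) (w : X → ℂ) (φ : X → X) (α : ℝ) (f : X → ℂ) :
    X → ℂ :=
  fun x => ((wcDeriv μ w φ x ^ (α / 2)).toReal : ℂ) *
    (wcTilde μ w φ x * (((wcDeriv μ w φ (φ x)) ^ ((1 - α) / 2)).toReal : ℂ) * f (φ x))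

/-- Membership in the domain of the Aluthge transform
`Δ_α(C_{φ,w}) = |C_{φ,w}|^α U |C_{φ,w}|^{1-α}`. -/
noncomputable def aluthgeDom (μ : Measure X) (w : X → ℂ) (φ : X → X) (α : ℝ) (f : X → ℂ) :
    Prop :=
  MemLp f 2 μ ∧
  MemLp (fun x => ((wcDeriv μ w φ x ^ ((1 - α) / 2)).toReal : ℂ) * f x) 2 μ ∧
  MemLp (fun x =>
    wcTilde μ w φ x * (((wcDeriv μ w φ (φ x)) ^ ((1 - α) / 2)).toReal : ℂ) * f (φ x)) 2 μ ∧
  MemLp (aluthgeFun μ w φ α f) 2 μ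

private lemma coe_nnnorm_ofReal_toReal {a : ℝ≥0∞} (ha : a ≠ ⊤) :
    (‖((a.toReal : ℝ) : ℂ)‖₊ : ℝ≥0∞) = a := by
  rw [Complex.nnnorm_real, ← enorm_eq_nnnorm, Real.enorm_eq_ofReal ENNReal.toReal_nonneg, ENNReal.ofReal_toReal ha]

private lemma sq_nnnorm_toReal_rpow {a : ℝ≥0∞} {r : ℝ} (ha : a ^ r ≠ ⊤) :
    (‖(((a ^ r).toReal : ℝ) : ℂ)‖₊ : ℝ≥0∞) ^ 2 = a ^ (2 * r) := by
  rw [coe_nnnorm_ofReal_toReal ha, ← ENNReal.rpow_natCast (a ^ r) 2, ← ENNReal.rpow_mul, mul_comm]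
  norm_num

private lemma memLp_two_iff_lintegral {μ : Measure X} {f : X → ℂ}
    (hf : AEStronglyMeasurable f μ) :
    MemLp f 2 μ ↔ ∫⁻ x, (‖f x‖₊ : ℝ≥0∞) ^ 2 ∂μ < ⊤ := by
  have key : ∀ a : ℝ≥0∞, a ^ ((2 : ℝ≥0∞)).toReal = a ^ 2 := by
    intro a
    rw [show ((2 : ℝ≥0∞)).toReal = ((2 : ℕ) : ℝ) by norm_num, ENNReal.rpow_natCast]
  constructor
  · intro h
    have := h.2
    rw [eLpNorm_lt_top_iff_lintegral_rpow_enorm_lt_top (by norm_num) (by norm_num)] at this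
    simpa [key, enorm_eq_nnnorm] using this
  · intro h
    refine ⟨hf, ?_⟩
    rw [eLpNorm_lt_top_iff_lintegral_rpow_enorm_lt_top (by norm_num) (by norm_num)]
    simpa [key, enorm_eq_nnnorm] using h

/-- The domain of `Δ_α(C_{φ,w})` equals
`L²((1 + h^{1-α} + E_{φ,w}(h^α)∘φ⁻¹ · h^{1-α}) dμ)`. -/
theorem aluthge_wco_transform_domain
    (μ : Measure X) [SigmaFinite μ] (w : X → ℂ) (φ : X → X)
    (hw : Measurable w) (hφ : Measurable φ)
    (habs : (wcMeasure μ w).map φ ≪ μ)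
    (hfin : ∀ᵐ x ∂μ, wcDeriv μ w φ x < ⊤)
    (α : ℝ) (hα : α ∈ Set.Ioc (0 : ℝ) 1)
    (E g : X → ℝ≥0∞)
    (hE : IsCondExp φ (wcMeasure μ w) (fun x => wcDeriv μ w φ x ^ α) E)
    (hg : IsQuot φ μ (wcMeasure μ w) (wcDeriv μ w φ) E g)
    (f : X → ℂ) (hf : AEStronglyMeasurable f μ) :
    aluthgeDom μ w φ α f ↔
      ∫⁻ x, (‖f x‖₊ : ℝ≥0∞) ^ 2 *
        (1 + wcDeriv μ w φ x ^ (1 - α) + g x * wcDeriv μ w φ x ^ (1 - α)) ∂μ < ⊤ := by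
  obtain ⟨hα0, hα1⟩ := hα
  have h1α : (0 : ℝ) ≤ (1 - α) / 2 := by linarith
  have hh : Measurable (wcDeriv μ w φ) := Measure.measurable_rnDeriv _ _
  have hw2 : Measurable fun x => (‖w x‖₊ : ℝ≥0∞) ^ 2 := hw.nnnorm.coe_nnreal_ennreal.pow_const 2
  have hνac : wcMeasure μ w ≪ μ := withDensity_absolutelyContinuous μ _
  haveI : SFinite (wcMeasure μ w) := by unfold wcMeasure; infer_instance
  have hmap : (wcMeasure μ w).map φ = μ.withDensity (wcDeriv μ w φ) :=
    (Measure.withDensity_rnDeriv_eq _ _ habs).symm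
  have hfinν : ∀ᵐ x ∂(wcMeasure μ w), wcDeriv μ w φ x < ⊤ := hνac.ae_le hfin
  -- measurable representative of `f`
  obtain ⟨f', hf'sm, hff'⟩ : ∃ f', StronglyMeasurable f' ∧ f =ᵐ[μ] f' :=
    ⟨hf.mk f, hf.stronglyMeasurable_mk, hf.ae_eq_mk⟩
  have hf'm : Measurable f' := hf'sm.measurable
  set N : Set X := toMeasurable μ {x | f x ≠ f' x} with hNdef
  have hNmeas : MeasurableSet N := measurableSet_toMeasurable _ _
  have hNnull : μ N = 0 := by
    rw [hNdef, measure_toMeasurable]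
    exact ae_iff.mp hff'
  have hsubN : ∀ x, f x ≠ f' x → x ∈ N := fun x hx => subset_toMeasurable _ _ hx
  have hwN : ∀ᵐ x ∂μ, φ x ∈ N → w x = 0 := by
    have hνN : wcMeasure μ w (φ ⁻¹' N) = 0 := by
      have hmapN : (wcMeasure μ w).map φ N = 0 := by
        rw [hmap, withDensity_apply _ hNmeas, setLIntegral_measure_zero _ _ hNnull]
      rwa [Measure.map_apply hφ hNmeas] at hmapN
    have h0 : ∫⁻ x in φ ⁻¹' N, (‖w x‖₊ : ℝ≥0∞) ^ 2 ∂μ = 0 := by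
      rwa [wcMeasure, withDensity_apply _ (hφ hNmeas)] at hνN
    filter_upwards [(setLIntegral_eq_zero_iff (hφ hNmeas) hw2).mp h0] with x hx hmem
    simpa using hx hmem
  -- conditional expectation transfer
  have hEmeas : Measurable E := hE.1.mono (measurable_iff_comap_le.mp hφ) le_rfl
  have hmeq : ((wcMeasure μ w).withDensity E).map φ
      = ((wcMeasure μ w).withDensity fun x => wcDeriv μ w φ x ^ α).map φ := by
    ext s hs
    rw [Measure.map_apply hφ hs, Measure.map_apply hφ hs,
      withDensity_apply _ (hφ hs), withDensity_apply _ (hφ hs)]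
    exact hE.2 s hs
  have hhα : Measurable fun x => wcDeriv μ w φ x ^ α := hh.pow measurable_const
  have key0 : ∀ G : X → ℝ≥0∞, Measurable G →
      ∫⁻ x, G (φ x) ∂(wcMeasure μ w) = ∫⁻ y, wcDeriv μ w φ y * G y ∂μ := by
    intro G hG
    rw [← lintegral_map hG hφ, hmap, lintegral_withDensity_eq_lintegral_mul μ hh hG]
    rfl
  have keyw : ∀ F : X → ℝ≥0∞, Measurable F →
      ∫⁻ x, F x ∂(wcMeasure μ w) = ∫⁻ x, (‖w x‖₊ : ℝ≥0∞) ^ 2 * F x ∂μ := by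
    intro F hF
    rw [wcMeasure, lintegral_withDensity_eq_lintegral_mul μ hw2 hF]
    rfl
  have keyE : ∀ G : X → ℝ≥0∞, Measurable G →
      ∫⁻ x, wcDeriv μ w φ x ^ α * G (φ x) ∂(wcMeasure μ w)
        = ∫⁻ y, wcDeriv μ w φ y * (g y * G y) ∂μ := by
    intro G hG
    have hGφ : Measurable fun x => G (φ x) := hG.comp hφ
    have e1 : ∫⁻ x, wcDeriv μ w φ x ^ α * G (φ x) ∂(wcMeasure μ w)
        = ∫⁻ y, G y ∂(((wcMeasure μ w).withDensity fun x => wcDeriv μ w φ x ^ α).map φ) := by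
      rw [lintegral_map hG hφ, lintegral_withDensity_eq_lintegral_mul _ hhα hGφ]
      rfl
    have e2 : ∫⁻ y, G y ∂(((wcMeasure μ w).withDensity E).map φ)
        = ∫⁻ x, E x * G (φ x) ∂(wcMeasure μ w) := by
      rw [lintegral_map hG hφ, lintegral_withDensity_eq_lintegral_mul _ hEmeas hGφ]
      rfl
    have e3 : ∫⁻ x, E x * G (φ x) ∂(wcMeasure μ w)
        = ∫⁻ x, g (φ x) * G (φ x) ∂(wcMeasure μ w) := by
      refine lintegral_congr_ae ?_
      filter_upwards [hg.2.1] with x hx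
      rw [hx]
    rw [e1, ← hmeq, e2, e3, key0 (fun y => g y * G y) (hg.1.mul hG)]
  -- the function Gf
  set Gf : X → ℝ≥0∞ := fun y =>
      (‖((wcDeriv μ w φ y ^ (-(1 / 2) : ℝ)).toReal : ℂ)‖₊ : ℝ≥0∞) ^ 2 *
      (‖((wcDeriv μ w φ y ^ ((1 - α) / 2)).toReal : ℂ)‖₊ : ℝ≥0∞) ^ 2 *
      (‖f' y‖₊ : ℝ≥0∞) ^ 2 with hGfdef
  have hGf : Measurable Gf := by
    refine Measurable.fun_mul (Measurable.fun_mul ?_ ?_) ?_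
    · exact (Complex.measurable_ofReal.comp
        (hh.pow measurable_const).ennreal_toReal).nnnorm.coe_nnreal_ennreal.pow_const 2
    · exact (Complex.measurable_ofReal.comp
        (hh.pow measurable_const).ennreal_toReal).nnnorm.coe_nnreal_ennreal.pow_const 2
    · exact hf'm.nnnorm.coe_nnreal_ennreal.pow_const 2
  have hF3'eq : ∀ x, (‖wcTilde μ w φ x * (((wcDeriv μ w φ (φ x)) ^ ((1 - α) / 2)).toReal : ℂ)
      * f' (φ x)‖₊ : ℝ≥0∞) ^ 2 = (‖w x‖₊ : ℝ≥0∞) ^ 2 * Gf (φ x) := by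
    intro x
    simp only [wcTilde, hGfdef, nnnorm_mul, ENNReal.coe_mul, mul_pow]
    ring
  -- pointwise identities
  have hptA : ∀ᵐ x ∂(wcMeasure μ w),
      (‖((wcDeriv μ w φ x ^ (α / 2)).toReal : ℂ)‖₊ : ℝ≥0∞) ^ 2 = wcDeriv μ w φ x ^ α := by
    filter_upwards [hfinν] with x hx
    rw [sq_nnnorm_toReal_rpow (ENNReal.rpow_ne_top_of_nonneg (by linarith) hx.ne),
      show 2 * (α / 2) = α by ring]
  have hpt2 : ∀ᵐ y ∂μ, (‖((wcDeriv μ w φ y ^ ((1 - α) / 2)).toReal : ℂ)‖₊ : ℝ≥0∞) ^ 2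
      = wcDeriv μ w φ y ^ (1 - α) := by
    filter_upwards [hfin] with y hy
    rw [sq_nnnorm_toReal_rpow (ENNReal.rpow_ne_top_of_nonneg h1α hy.ne),
      show 2 * ((1 - α) / 2) = 1 - α by ring]
  have hprod : ∀ᵐ y ∂μ, wcDeriv μ w φ y ≠ 0 →
      wcDeriv μ w φ y * Gf y = (‖f' y‖₊ : ℝ≥0∞) ^ 2 * wcDeriv μ w φ y ^ (1 - α) := by
    filter_upwards [hfin] with y hy hne
    have htop := hy.ne
    have hnt1 : wcDeriv μ w φ y ^ (-(1 / 2) : ℝ) ≠ ⊤ := by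
      simp [ENNReal.rpow_eq_top_iff, hne, htop]
    rw [hGfdef]
    simp only
    rw [sq_nnnorm_toReal_rpow hnt1,
      sq_nnnorm_toReal_rpow (ENNReal.rpow_ne_top_of_nonneg h1α htop)]
    rw [show wcDeriv μ w φ y *
        (wcDeriv μ w φ y ^ (2 * (-(1 / 2) : ℝ)) * wcDeriv μ w φ y ^ (2 * ((1 - α) / 2))
          * (‖f' y‖₊ : ℝ≥0∞) ^ 2)
        = (‖f' y‖₊ : ℝ≥0∞) ^ 2 * (wcDeriv μ w φ y ^ (1 : ℝ) *
          (wcDeriv μ w φ y ^ (2 * (-(1 / 2) : ℝ)) * wcDeriv μ w φ y ^ (2 * ((1 - α) / 2)))) by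
        rw [ENNReal.rpow_one]; ring]
    rw [← ENNReal.rpow_add _ _ hne htop, ← ENNReal.rpow_add _ _ hne htop,
      show (1 : ℝ) + (2 * (-(1 / 2) : ℝ) + 2 * ((1 - α) / 2)) = 1 - α by ring]
  have hle : ∀ᵐ y ∂μ, wcDeriv μ w φ y * Gf y
      ≤ (‖f' y‖₊ : ℝ≥0∞) ^ 2 * wcDeriv μ w φ y ^ (1 - α) := by
    filter_upwards [hprod] with y hy
    rcases eq_or_ne (wcDeriv μ w φ y) 0 with h0 | h0
    · simp [h0]
    · exact (hy h0).le
  have hgeq : ∀ᵐ y ∂μ, wcDeriv μ w φ y * (g y * Gf y)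
      = (‖f' y‖₊ : ℝ≥0∞) ^ 2 * (g y * wcDeriv μ w φ y ^ (1 - α)) := by
    filter_upwards [hprod, hg.2.2] with y hy hg0
    rcases eq_or_ne (wcDeriv μ w φ y) 0 with h0 | h0
    · simp [h0, hg0 h0]
    · rw [show wcDeriv μ w φ y * (g y * Gf y) = g y * (wcDeriv μ w φ y * Gf y) by ring, hy h0]
      ring
  -- a.e. replacement of f by f' in the composed functions
  have hae3 : (fun x => wcTilde μ w φ x *
        (((wcDeriv μ w φ (φ x)) ^ ((1 - α) / 2)).toReal : ℂ) * f (φ x))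
      =ᵐ[μ] fun x => wcTilde μ w φ x *
        (((wcDeriv μ w φ (φ x)) ^ ((1 - α) / 2)).toReal : ℂ) * f' (φ x) := by
    filter_upwards [hwN] with x hx
    by_cases hmem : φ x ∈ N
    · have hw0 : w x = 0 := hx hmem
      simp [wcTilde, hw0]
    · have hfe : f (φ x) = f' (φ x) := by
        by_contra hne
        exact hmem (hsubN _ hne)
      simp only [hfe]
  have hae4 : aluthgeFun μ w φ α f =ᵐ[μ] fun x => ((wcDeriv μ w φ x ^ (α / 2)).toReal : ℂ)
      * (wcTilde μ w φ x * (((wcDeriv μ w φ (φ x)) ^ ((1 - α) / 2)).toReal : ℂ) * f' (φ x)) := by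
    filter_upwards [hae3] with x hx
    simp only [aluthgeFun]
    rw [hx]
  -- integral identities
  have hI3 : ∫⁻ x, (‖wcTilde μ w φ x * (((wcDeriv μ w φ (φ x)) ^ ((1 - α) / 2)).toReal : ℂ)
      * f' (φ x)‖₊ : ℝ≥0∞) ^ 2 ∂μ = ∫⁻ y, wcDeriv μ w φ y * Gf y ∂μ := by
    calc ∫⁻ x, (‖wcTilde μ w φ x * (((wcDeriv μ w φ (φ x)) ^ ((1 - α) / 2)).toReal : ℂ)
            * f' (φ x)‖₊ : ℝ≥0∞) ^ 2 ∂μ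
        = ∫⁻ x, (‖w x‖₊ : ℝ≥0∞) ^ 2 * Gf (φ x) ∂μ := lintegral_congr fun x => hF3'eq x
      _ = ∫⁻ x, Gf (φ x) ∂(wcMeasure μ w) := (keyw _ (hGf.comp hφ)).symm
      _ = ∫⁻ y, wcDeriv μ w φ y * Gf y ∂μ := key0 _ hGf
  have hAmeas : Measurable fun x => (‖((wcDeriv μ w φ x ^ (α / 2)).toReal : ℂ)‖₊ : ℝ≥0∞) ^ 2 :=
    (Complex.measurable_ofReal.comp (hh.pow measurable_const).ennreal_toReal).nnnorm.coe_nnreal_ennreal.pow_const 2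
  have hI4 : ∫⁻ x, (‖((wcDeriv μ w φ x ^ (α / 2)).toReal : ℂ)
        * (wcTilde μ w φ x * (((wcDeriv μ w φ (φ x)) ^ ((1 - α) / 2)).toReal : ℂ)
          * f' (φ x))‖₊ : ℝ≥0∞) ^ 2 ∂μ
      = ∫⁻ y, wcDeriv μ w φ y * (g y * Gf y) ∂μ := by
    calc ∫⁻ x, (‖((wcDeriv μ w φ x ^ (α / 2)).toReal : ℂ)
            * (wcTilde μ w φ x * (((wcDeriv μ w φ (φ x)) ^ ((1 - α) / 2)).toReal : ℂ)
              * f' (φ x))‖₊ : ℝ≥0∞) ^ 2 ∂μ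
        = ∫⁻ x, (‖w x‖₊ : ℝ≥0∞) ^ 2 *
            ((‖((wcDeriv μ w φ x ^ (α / 2)).toReal : ℂ)‖₊ : ℝ≥0∞) ^ 2 * Gf (φ x)) ∂μ := by
          refine lintegral_congr fun x => ?_
          rw [nnnorm_mul, ENNReal.coe_mul, mul_pow, hF3'eq x]
          ring
      _ = ∫⁻ x, (‖((wcDeriv μ w φ x ^ (α / 2)).toReal : ℂ)‖₊ : ℝ≥0∞) ^ 2 * Gf (φ x)
            ∂(wcMeasure μ w) := (keyw _ (hAmeas.mul (hGf.comp hφ))).symm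
      _ = ∫⁻ x, wcDeriv μ w φ x ^ α * Gf (φ x) ∂(wcMeasure μ w) := by
          refine lintegral_congr_ae ?_
          filter_upwards [hptA] with x hx
          rw [hx]
      _ = ∫⁻ y, wcDeriv μ w φ y * (g y * Gf y) ∂μ := keyE _ hGf
  -- the membership criteria
  have hmem1 : MemLp f 2 μ ↔ ∫⁻ x, (‖f x‖₊ : ℝ≥0∞) ^ 2 ∂μ < ⊤ := memLp_two_iff_lintegral hf
  have haesm2 : AEStronglyMeasurable
      (fun x => (((wcDeriv μ w φ x ^ ((1 - α) / 2)).toReal : ℝ) : ℂ)) μ :=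
    (Complex.measurable_ofReal.comp (hh.pow measurable_const).ennreal_toReal).aestronglyMeasurable
  have hmem2 : MemLp (fun x => ((wcDeriv μ w φ x ^ ((1 - α) / 2)).toReal : ℂ) * f x) 2 μ ↔
      ∫⁻ y, (‖f y‖₊ : ℝ≥0∞) ^ 2 * wcDeriv μ w φ y ^ (1 - α) ∂μ < ⊤ := by
    have heq : ∫⁻ x, (‖((wcDeriv μ w φ x ^ ((1 - α) / 2)).toReal : ℂ) * f x‖₊ : ℝ≥0∞) ^ 2 ∂μ
        = ∫⁻ y, (‖f y‖₊ : ℝ≥0∞) ^ 2 * wcDeriv μ w φ y ^ (1 - α) ∂μ := by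
      refine lintegral_congr_ae ?_
      filter_upwards [hpt2] with y hy
      rw [nnnorm_mul, ENNReal.coe_mul, mul_pow, hy, mul_comm]
    have haesm2' : AEStronglyMeasurable
        (fun x => (((wcDeriv μ w φ x ^ ((1 - α) / 2)).toReal : ℝ) : ℂ) * f x) μ :=
      haesm2.mul hf
    rw [memLp_two_iff_lintegral haesm2', heq]
  have hmeas3 : Measurable fun x => wcTilde μ w φ x *
      (((wcDeriv μ w φ (φ x)) ^ ((1 - α) / 2)).toReal : ℂ) * f' (φ x) := by
    refine Measurable.mul (Measurable.mul ?_ ?_) (hf'm.comp hφ)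
    · exact hw.mul (Complex.measurable_ofReal.comp
        (((hh.comp hφ).pow measurable_const).ennreal_toReal))
    · exact Complex.measurable_ofReal.comp
        (((hh.comp hφ).pow measurable_const).ennreal_toReal)
  have hmem3 : MemLp (fun x => wcTilde μ w φ x *
        (((wcDeriv μ w φ (φ x)) ^ ((1 - α) / 2)).toReal : ℂ) * f (φ x)) 2 μ ↔
      ∫⁻ y, wcDeriv μ w φ y * Gf y ∂μ < ⊤ := by
    rw [memLp_congr_ae hae3, memLp_two_iff_lintegral hmeas3.aestronglyMeasurable, hI3]
  have hmeas4 : Measurable fun x => ((wcDeriv μ w φ x ^ (α / 2)).toReal : ℂ)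
      * (wcTilde μ w φ x * (((wcDeriv μ w φ (φ x)) ^ ((1 - α) / 2)).toReal : ℂ) * f' (φ x)) :=
    (Complex.measurable_ofReal.comp (hh.pow measurable_const).ennreal_toReal).mul hmeas3
  have hmem4 : MemLp (aluthgeFun μ w φ α f) 2 μ ↔
      ∫⁻ y, (‖f y‖₊ : ℝ≥0∞) ^ 2 * (g y * wcDeriv μ w φ y ^ (1 - α)) ∂μ < ⊤ := by
    rw [memLp_congr_ae hae4, memLp_two_iff_lintegral hmeas4.aestronglyMeasurable, hI4]
    have heq2 : ∫⁻ y, wcDeriv μ w φ y * (g y * Gf y) ∂μ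
        = ∫⁻ y, (‖f y‖₊ : ℝ≥0∞) ^ 2 * (g y * wcDeriv μ w φ y ^ (1 - α)) ∂μ := by
      refine lintegral_congr_ae ?_
      filter_upwards [hgeq, hff'] with y hy hy'
      rw [hy, hy']
    rw [heq2]
  -- decomposition of the right-hand side
  have hfm2 : AEMeasurable (fun x => (‖f x‖₊ : ℝ≥0∞) ^ 2) μ := hf.aemeasurable.nnnorm.coe_nnreal_ennreal.pow_const 2
  have hRHS : ∫⁻ x, (‖f x‖₊ : ℝ≥0∞) ^ 2 *
        (1 + wcDeriv μ w φ x ^ (1 - α) + g x * wcDeriv μ w φ x ^ (1 - α)) ∂μ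
      = (∫⁻ x, (‖f x‖₊ : ℝ≥0∞) ^ 2 ∂μ)
        + (∫⁻ x, (‖f x‖₊ : ℝ≥0∞) ^ 2 * wcDeriv μ w φ x ^ (1 - α) ∂μ)
        + ∫⁻ x, (‖f x‖₊ : ℝ≥0∞) ^ 2 * (g x * wcDeriv μ w φ x ^ (1 - α)) ∂μ := by
    have hsplit : (fun x => (‖f x‖₊ : ℝ≥0∞) ^ 2 *
          (1 + wcDeriv μ w φ x ^ (1 - α) + g x * wcDeriv μ w φ x ^ (1 - α)))
        = fun x => ((‖f x‖₊ : ℝ≥0∞) ^ 2 + (‖f x‖₊ : ℝ≥0∞) ^ 2 * wcDeriv μ w φ x ^ (1 - α))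
            + (‖f x‖₊ : ℝ≥0∞) ^ 2 * (g x * wcDeriv μ w φ x ^ (1 - α)) := by
      funext x
      ring
    rw [hsplit, lintegral_add_left'
      (hfm2.fun_add (hfm2.fun_mul ((hh.pow measurable_const).aemeasurable))) _,
      lintegral_add_left' hfm2]
  rw [hRHS]
  unfold aluthgeDom
  constructor
  · rintro ⟨c1, c2, _, c4⟩
    exact ENNReal.add_lt_top.mpr ⟨ENNReal.add_lt_top.mpr ⟨hmem1.mp c1, hmem2.mp c2⟩, hmem4.mp c4⟩
  · intro hlt
    obtain ⟨h12, hIG⟩ := ENNReal.add_lt_top.mp hlt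
    obtain ⟨hI1, hI2⟩ := ENNReal.add_lt_top.mp h12
    refine ⟨hmem1.mpr hI1, hmem2.mpr hI2, hmem3.mpr ?_, hmem4.mpr hIG⟩
    calc ∫⁻ y, wcDeriv μ w φ y * Gf y ∂μ
        ≤ ∫⁻ y, (‖f' y‖₊ : ℝ≥0∞) ^ 2 * wcDeriv μ w φ y ^ (1 - α) ∂μ := lintegral_mono_ae hle
      _ = ∫⁻ y, (‖f y‖₊ : ℝ≥0∞) ^ 2 * wcDeriv μ w φ y ^ (1 - α) ∂μ := by
          refine lintegral_congr_ae ?_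
          filter_upwards [hff'] with y hy
          rw [hy]
      _ < ⊤ := hI2
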